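/- Let $d \geq 1$ and let $Z \subseteq \prod_{i<d} X_i$ be a DDF subset of a product of perfect Polish spaces (with witnessing open sets $U_i$). Then for every $k < \omega$, there exist finite sets $A_i \subseteq X_i$ with $|A_i| = k$ for each $i < d$ and $\prod_{i<d} A_i \subseteq Z$. -/

import Mathlib

/-- `IsDDF d X t U Z`: `Z ⊆ ∏_{i<d} U i` is a dense-by-dense-filter (DDF) set,
defined by recursion on `d`. For `d = 0` it means `Z` is nonempty; for `d + 1` it
means that `Z ⊆ ∏ U i`, the projection of `Z` to the first `d` coordinates is DDF,
and the fibers of `Z` over points of this projection generate a filter of subsets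
of `X (last d)` that are dense in `U (last d)` (i.e. every finite intersection of
fibers is dense in `U (last d)`). -/
def IsDDF : (d : ℕ) → (X : Fin d → Type) → (t : ∀ i, TopologicalSpace (X i)) →
    (U : ∀ i, Set (X i)) → (Z : Set (∀ i, X i)) → Prop
  | 0, _, _, _, Z => Z.Nonempty
  | (d + 1), X, t, U, Z =>
      Z ⊆ {f | ∀ i, f i ∈ U i} ∧
      IsDDF d (fun i => X i.castSucc) (fun i => t i.castSucc)
        (fun i => U i.castSucc) (Fin.init '' Z) ∧
      ∀ F : Finset (∀ i : Fin d, X i.castSucc), ↑F ⊆ Fin.init '' Z →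
        U (Fin.last d) ⊆
          @closure _ (t (Fin.last d)) {y | ∀ x ∈ F, Fin.snoc x y ∈ Z}

/-- `Z` is somewhere-DDF: for some nonempty open sets `U i ⊆ X i`, `Z` is a DDF
subset of `∏ U i`. -/
def SomewhereDDF (d : ℕ) (X : Fin d → Type) (t : ∀ i, TopologicalSpace (X i))
    (Z : Set (∀ i, X i)) : Prop :=
  ∃ U : ∀ i, Set (X i), (∀ i, @IsOpen _ (t i) (U i)) ∧ (∀ i, (U i).Nonempty) ∧
    IsDDF d X t U Z


lemma pick_finset {X : Type} [TopologicalSpace X] [T1Space X]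
    (hperf : Perfect (Set.univ : Set X)) (U D : Set X) (hU : IsOpen U)
    (hUne : U.Nonempty) (hD : U ⊆ closure D) (k : ℕ) :
    ∃ A : Finset X, A.card = k ∧ ↑A ⊆ D ∩ U := by
  classical
  induction k with
  | zero => exact ⟨∅, rfl, by simp⟩
  | succ k ih =>
    obtain ⟨A, hcard, hsub⟩ := ih
    have hVopen : IsOpen (U \ ↑A) := hU.sdiff A.finite_toSet.isClosed
    have hVne : (U \ (↑A : Set X)).Nonempty := by
      obtain ⟨x, hx⟩ := hUne
      have hacc : AccPt x (Filter.principal (Set.univ : Set X)) :=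
        hperf.acc x (Set.mem_univ x)
      have hnb : (nhdsWithin x {x}ᶜ).NeBot := by
        rw [AccPt, Filter.principal_univ, inf_top_eq] at hacc
        exact hacc
      have hmem : U ∩ ((↑A : Set X) \ {x})ᶜ ∈ nhdsWithin x {x}ᶜ := by
        apply nhdsWithin_le_nhds
        apply Filter.inter_mem (hU.mem_nhds hx)
        exact ((A.finite_toSet.subset Set.diff_subset).isClosed.isOpen_compl).mem_nhds
          (by simp)
      have : (U ∩ ((↑A : Set X) \ {x})ᶜ ∩ {x}ᶜ).Nonempty := by
        have := Filter.inter_mem hmem (self_mem_nhdsWithin (s := ({x}ᶜ : Set X)))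
        exact Filter.nonempty_of_mem this
      obtain ⟨y, ⟨hyU, hyA⟩, hyx⟩ := this
      refine ⟨y, hyU, fun hy => hyA ⟨hy, hyx⟩⟩
    obtain ⟨y, hyV⟩ := hVne
    have : ((U \ ↑A) ∩ D).Nonempty := by
      have hyc : y ∈ closure D := hD hyV.1
      rw [mem_closure_iff] at hyc
      exact hyc _ hVopen hyV
    obtain ⟨z, hzV, hzD⟩ := this
    refine ⟨insert z A, ?_, ?_⟩
    · rw [Finset.card_insert_of_notMem (fun h => hzV.2 h), hcard]
    · intro w hw
      rcases Finset.mem_insert.mp hw with rfl | hw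
      · exact ⟨hzD, hzV.1⟩
      · exact hsub hw

lemma aux_ddf (d : ℕ) : ∀ (X : Fin (d + 1) → Type) (t : ∀ i, TopologicalSpace (X i))
    (_ : ∀ i, @PolishSpace (X i) (t i))
    (_ : ∀ i, @Perfect (X i) (t i) Set.univ)
    (U : ∀ i, Set (X i)) (_ : ∀ i, @IsOpen _ (t i) (U i)) (_ : ∀ i, (U i).Nonempty)
    (Z : Set (∀ i, X i)) (_ : IsDDF (d + 1) X t U Z) (k : ℕ),
    ∃ A : ∀ i, Finset (X i), (∀ i, (A i).card = k) ∧
      {f : ∀ i, X i | ∀ i, f i ∈ A i} ⊆ Z := by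
  induction d with
  | zero =>
    intro X t hPol hperf U hUo hUne Z hZ k
    classical
    obtain ⟨hsub, hne, hfib⟩ := hZ
    obtain ⟨x0, hx0⟩ := (hne : (Fin.init '' Z).Nonempty)
    have hF : (↑({x0} : Finset (∀ i : Fin 0, X i.castSucc)) : Set _) ⊆ Fin.init '' Z := by
      simp [hx0]
    have hdense := hfib {x0} hF
    letI := t (Fin.last 0)
    haveI : PolishSpace (X (Fin.last 0)) := hPol _
    obtain ⟨A0, hA0card, hA0sub⟩ := pick_finset (hperf (Fin.last 0)) _ _
      (hUo (Fin.last 0)) (hUne (Fin.last 0)) hdense k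
    refine ⟨Fin.snoc (fun i => i.elim0) A0, ?_, ?_⟩
    · intro i
      have hi : i = Fin.last 0 := Fin.ext (by omega)
      subst hi
      rw [Fin.snoc_last, hA0card]
    · intro f hf
      have hlast : f (Fin.last 0) ∈ A0 := by
        have := hf (Fin.last 0)
        rwa [Fin.snoc_last] at this
      have hD : f (Fin.last 0) ∈ {y | ∀ x ∈ ({x0} : Finset _), Fin.snoc x y ∈ Z} :=
        (hA0sub hlast).1
      have hz : Fin.snoc x0 (f (Fin.last 0)) ∈ Z := hD x0 (Finset.mem_singleton_self x0)
      have hfeq : f = Fin.snoc x0 (f (Fin.last 0)) := by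
        funext i
        have hi : i = Fin.last 0 := Fin.ext (by omega)
        subst hi
        rw [Fin.snoc_last]
      rwa [hfeq]
  | succ d ih =>
    intro X t hPol hperf U hUo hUne Z hZ k
    classical
    obtain ⟨hsub, hproj, hfib⟩ := hZ
    obtain ⟨A', hA'card, hA'sub⟩ := ih (fun i => X i.castSucc) (fun i => t i.castSucc)
      (fun i => hPol i.castSucc) (fun i => hperf i.castSucc)
      (fun i => U i.castSucc) (fun i => hUo i.castSucc) (fun i => hUne i.castSucc)
      (Fin.init '' Z) hproj k
    -- the grid is finite
    have hGfin : {f : ∀ i : Fin (d + 1), X i.castSucc | ∀ i, f i ∈ A' i}.Finite := by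
      have : {f : ∀ i : Fin (d + 1), X i.castSucc | ∀ i, f i ∈ A' i} =
          Set.pi Set.univ (fun i => (↑(A' i) : Set (X i.castSucc))) := by
        ext f; simp [Set.mem_pi]
      rw [this]
      exact Set.Finite.pi (fun i => (A' i).finite_toSet)
    set F : Finset (∀ i : Fin (d + 1), X i.castSucc) := hGfin.toFinset with hFdef
    have hFsub : (↑F : Set _) ⊆ Fin.init '' Z := by
      intro x hx
      rw [hFdef, Set.Finite.coe_toFinset] at hx
      exact hA'sub hx
    have hdense := hfib F hFsub
    letI := t (Fin.last (d + 1))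
    haveI : PolishSpace (X (Fin.last (d + 1))) := hPol _
    obtain ⟨Alast, hAlcard, hAlsub⟩ := pick_finset (hperf (Fin.last (d + 1))) _ _
      (hUo (Fin.last (d + 1))) (hUne (Fin.last (d + 1))) hdense k
    refine ⟨Fin.snoc A' Alast, ?_, ?_⟩
    · intro i
      refine Fin.lastCases ?_ ?_ i
      · simp [Fin.snoc_last, hAlcard]
      · intro j
        simp [Fin.snoc_castSucc, hA'card]
    · intro f hf
      have hinit : Fin.init f ∈ F := by
        rw [hFdef, Set.Finite.mem_toFinset]
        intro j
        have := hf j.castSucc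
        rwa [Fin.snoc_castSucc] at this
      have hlast : f (Fin.last (d + 1)) ∈ Alast := by
        have := hf (Fin.last (d + 1))
        rwa [Fin.snoc_last] at this
      have hz : Fin.snoc (Fin.init f) (f (Fin.last (d + 1))) ∈ Z :=
        (hAlsub hlast).1 (Fin.init f) hinit
      rwa [Fin.snoc_init_self] at hz

theorem stmt8 (d : ℕ) (hd : 1 ≤ d) (X : Fin d → Type) [t : ∀ i, TopologicalSpace (X i)]
    (hPolish : ∀ i, PolishSpace (X i)) (hperf : ∀ i, Perfect (Set.univ : Set (X i)))
    (U : ∀ i, Set (X i)) (hUopen : ∀ i, IsOpen (U i)) (hUne : ∀ i, (U i).Nonempty)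
    (Z : Set (∀ i, X i)) (hZ : IsDDF d X (fun i => inferInstance) U Z) (k : ℕ) :
    ∃ A : ∀ i, Finset (X i),
      (∀ i, (A i).card = k) ∧
      {f : ∀ i, X i | ∀ i, f i ∈ A i} ⊆ Z := by
  obtain ⟨m, rfl⟩ : ∃ m, d = m + 1 := ⟨d - 1, by omega⟩
  exact aux_ddf m X (fun i => t i) hPolish hperf U hUopen hUne Z hZ k
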